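/- arXiv:1806.08004 — 4 statements merged into one kernel-verified Lean document; each statement's English description precedes it below -/
import Mathlib

section
/- Let (α_k)_{k=1}^M be real numbers with −π < α_k < π for all k and ∑_{k=1}^M α_k = 2π, and let θ ∈ (0, π). Then there exists an index i* with 1 ≤ i* ≤ M such that ∑_{k=1}^{i*−1} α_k ≤ θ and θ < ∑_{k=1}^{i*} α_k < θ + π. -/
/-- Discrete crossing lemma: if real numbers `α 1, …, α M` all lie strictly
between `−π` and `π` and sum to `2π`, and `θ ∈ (0, π)`, then there is an index
`i*` with `1 ≤ i* ≤ M` such that the partial sum up to `i* − 1` is `≤ θ` while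
the partial sum up to `i*` lies strictly in `(θ, θ + π)`. -/
theorem partial_sum_crossing (M : ℕ) (α : ℕ → ℝ) (θ : ℝ)
    (hα : ∀ k, 1 ≤ k → k ≤ M → -Real.pi < α k ∧ α k < Real.pi)
    (hsum : ∑ k ∈ Finset.Icc 1 M, α k = 2 * Real.pi)
    (hθ0 : 0 < θ) (hθπ : θ < Real.pi) :
    ∃ i, 1 ≤ i ∧ i ≤ M ∧
      (∑ k ∈ Finset.Icc 1 (i - 1), α k) ≤ θ ∧
      θ < (∑ k ∈ Finset.Icc 1 i, α k) ∧
      (∑ k ∈ Finset.Icc 1 i, α k) < θ + Real.pi := by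
  classical
  set S : ℕ → ℝ := fun i => ∑ k ∈ Finset.Icc 1 i, α k with hS
  have hSM : θ < S M := by
    have : S M = 2 * Real.pi := hsum
    rw [this]; nlinarith [Real.pi_pos]
  have hP : ∃ i, θ < S i := ⟨M, hSM⟩
  set i := Nat.find hP with hidef
  have hi : θ < S i := Nat.find_spec hP
  have hile : i ≤ M := Nat.find_le hSM
  have hi1 : 1 ≤ i := by
    rcases Nat.eq_zero_or_pos i with h0 | h0
    · exfalso
      have : S 0 = 0 := by simp [hS]
      rw [h0, this] at hi
      linarith
    · exact h0
  have hprev : S (i - 1) ≤ θ := by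
    have := Nat.find_min hP (m := i - 1) (by omega)
    linarith [not_lt.mp this]
  have hstep : S i = S (i - 1) + α i := by
    have h := Finset.sum_Icc_succ_top (a := 1) (b := i - 1)
      (Nat.le_add_left 1 (i - 1) : 1 ≤ i - 1 + 1) α
    have hie : i - 1 + 1 = i := by omega
    rw [hie] at h
    exact h
  have hαi := hα i hi1 hile
  refine ⟨i, hi1, hile, hprev, hi, ?_⟩
  show S i < θ + Real.pi
  rw [hstep]
  linarith [hαi.2]
end

section
/- There is no finite sequence of unit vectors n₁, …, n_M, n_{M+1} = n₁ in ℝ² and angles α₁, …, α_M with −π < α_i < π, n_{i+1} = R_{α_i} n_i for all i, ∑_{i=1}^M α_i = 2π, and a unit vector Ω such that ⟨n_i, Ω⟩ > 0 for all i = 1, …, M. -/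
/-- Counterclockwise rotation of the plane by angle `α`. -/
noncomputable def rot (α : ℝ) (v : ℝ × ℝ) : ℝ × ℝ :=
  (Real.cos α * v.1 - Real.sin α * v.2, Real.sin α * v.1 + Real.cos α * v.2)

/-- Euclidean inner product on `ℝ²`. -/
def dot2 (u v : ℝ × ℝ) : ℝ := u.1 * v.1 + u.2 * v.2

noncomputable def cx (v : ℝ × ℝ) : ℂ := ⟨v.1, v.2⟩

lemma cx_rot (a : ℝ) (v : ℝ × ℝ) : cx (rot a v) = Complex.exp (a * Complex.I) * cx v := by
  rw [Complex.exp_mul_I]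
  apply Complex.ext <;>
    simp [cx, rot, Complex.add_re, Complex.mul_re, Complex.mul_im, Complex.cos_ofReal_re,
      Complex.sin_ofReal_re, Complex.cos_ofReal_im, Complex.sin_ofReal_im] <;> ring

lemma dot2_eq (u v : ℝ × ℝ) : dot2 u v = (cx u * (starRingEnd ℂ) (cx v)).re := by
  simp [cx, dot2, Complex.mul_re]

lemma cx_normSq (v : ℝ × ℝ) : Complex.normSq (cx v) = dot2 v v := by
  simp [cx, dot2, Complex.normSq_mk]

/-- There is no closed chain of unit vectors `n 1, …, n M, n (M+1) = n 1` in
`ℝ²`, with turning angles `α i ∈ (−π, π)` summing to `2π`, such that all `n i`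
have positive inner product with a fixed unit vector `Ω`. -/
theorem no_positive_cycle (M : ℕ) (hM : 1 ≤ M)
    (n : ℕ → ℝ × ℝ) (α : ℕ → ℝ) (Ω : ℝ × ℝ)
    (hΩ : dot2 Ω Ω = 1)
    (hunit : ∀ i, 1 ≤ i → i ≤ M → dot2 (n i) (n i) = 1)
    (hα : ∀ i, 1 ≤ i → i ≤ M → -Real.pi < α i ∧ α i < Real.pi)
    (hstep : ∀ i, 1 ≤ i → i ≤ M → n (i + 1) = rot (α i) (n i))
    (hclosed : n (M + 1) = n 1)
    (hsum : ∑ i ∈ Finset.Icc 1 M, α i = 2 * Real.pi)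
    (hpos : ∀ i, 1 ≤ i → i ≤ M → 0 < dot2 (n i) Ω) :
    False := by
  have hpi : (0:ℝ) < Real.pi := Real.pi_pos
  set ω : ℂ := cx Ω with hωdef
  have hωsq : Complex.normSq ω = 1 := by rw [hωdef, cx_normSq, hΩ]
  -- extend the unit/positivity facts to i = M+1 via closedness
  have hunit' : ∀ i, 1 ≤ i → i ≤ M + 1 → Complex.normSq (cx (n i)) = 1 := by
    intro i h1 h2
    rcases eq_or_lt_of_le h2 with h | h
    · rw [h, hclosed, cx_normSq, hunit 1 le_rfl hM]
    · rw [cx_normSq]; exact hunit i h1 (by omega)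
  have hpos' : ∀ i, 1 ≤ i → i ≤ M + 1 → 0 < dot2 (n i) Ω := by
    intro i h1 h2
    rcases eq_or_lt_of_le h2 with h | h
    · rw [h, hclosed]; exact hpos 1 le_rfl hM
    · exact hpos i h1 (by omega)
  -- the "relative angle" of n i with respect to Ω
  set β : ℕ → ℝ := fun i => Complex.arg (cx (n i) * (starRingEnd ℂ) ω) with hβdef
  have hzabs : ∀ i, 1 ≤ i → i ≤ M + 1 →
      ‖cx (n i) * (starRingEnd ℂ) ω‖ = 1 := by
    intro i h1 h2
    rw [norm_mul, Complex.norm_conj]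
    have h1' : ‖cx (n i)‖ = 1 := by
      have := hunit' i h1 h2
      rw [← Complex.sq_norm] at this
      nlinarith [norm_nonneg (cx (n i))]
    have h2' : ‖ω‖ = 1 := by
      rw [← Complex.sq_norm] at hωsq
      nlinarith [norm_nonneg ω]
    rw [h1', h2', mul_one]
  have hcosβ : ∀ i, 1 ≤ i → i ≤ M + 1 → Real.cos (β i) = dot2 (n i) Ω := by
    intro i h1 h2
    have hne : cx (n i) * (starRingEnd ℂ) ω ≠ 0 := by
      intro h
      have := hzabs i h1 h2
      rw [h] at this; simp at this
    rw [hβdef]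
    simp only
    rw [Complex.cos_arg hne, hzabs i h1 h2, div_one, dot2_eq]
  have hβrange : ∀ i, 1 ≤ i → i ≤ M + 1 → -(Real.pi/2) < β i ∧ β i < Real.pi/2 := by
    intro i h1 h2
    have hcos : 0 < Real.cos (β i) := by rw [hcosβ i h1 h2]; exact hpos' i h1 h2
    have harg1 := Complex.neg_pi_lt_arg (cx (n i) * (starRingEnd ℂ) ω)
    have harg2 := Complex.arg_le_pi (cx (n i) * (starRingEnd ℂ) ω)
    constructor
    · by_contra h
      push_neg at h
      have : Real.cos (β i) ≤ 0 := by
        rw [← Real.cos_neg]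
        apply Real.cos_nonpos_of_pi_div_two_le_of_le (by linarith) (by linarith)
      linarith
    · by_contra h
      push_neg at h
      have : Real.cos (β i) ≤ 0 :=
        Real.cos_nonpos_of_pi_div_two_le_of_le h (by linarith)
      linarith
  -- representation via arg
  have hrep : ∀ i, 1 ≤ i → i ≤ M + 1 →
      cx (n i) = Complex.exp (β i * Complex.I) * ω := by
    intro i h1 h2
    have h := Complex.norm_mul_exp_arg_mul_I (cx (n i) * (starRingEnd ℂ) ω)
    rw [hzabs i h1 h2] at h
    simp only [Complex.ofReal_one, one_mul] at h
    have hωω : ω * (starRingEnd ℂ) ω = 1 := by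
      rw [Complex.mul_conj, hωsq, Complex.ofReal_one]
    calc cx (n i) = cx (n i) * ((starRingEnd ℂ) ω * ω) := by
            rw [mul_comm ((starRingEnd ℂ) ω), hωω, mul_one]
      _ = (cx (n i) * (starRingEnd ℂ) ω) * ω := by ring
      _ = Complex.exp (β i * Complex.I) * ω := by rw [h]
  -- the lifted angle
  set θ : ℕ → ℝ := fun i => β 1 + ∑ j ∈ Finset.Ico 1 i, α j with hθdef
  have hθ1 : θ 1 = β 1 := by simp [hθdef]
  have hθsucc : ∀ i, 1 ≤ i → θ (i + 1) = θ i + α i := by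
    intro i hi
    simp only [hθdef]
    rw [Finset.sum_Ico_succ_top hi]
    ring
  have hθrep : ∀ i, 1 ≤ i → i ≤ M + 1 →
      cx (n i) = Complex.exp (θ i * Complex.I) * ω := by
    intro i hi
    induction i, hi using Nat.le_induction with
    | base => intro _; rw [hθ1]; exact hrep 1 le_rfl (by omega)
    | succ i hi ih =>
      intro hle
      have hiM : i ≤ M := by omega
      rw [hstep i hi hiM, cx_rot, ih (by omega), hθsucc i hi, ← mul_assoc,
        ← Complex.exp_add]
      push_cast
      ring_nf
  -- θ i and β i agree modulo 2π, and in fact agree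
  have hkey : ∀ i, 1 ≤ i → i ≤ M + 1 → ∃ k : ℤ, θ i - β i = k * (2 * Real.pi) := by
    intro i h1 h2
    have h := (hθrep i h1 h2).symm.trans (hrep i h1 h2)
    have hωne : ω ≠ 0 := by
      intro h; rw [h] at hωsq; simp at hωsq
    have hcancel : Complex.exp ((θ i : ℝ) * Complex.I) = Complex.exp ((β i : ℝ) * Complex.I) :=
      mul_right_cancel₀ hωne h
    have hexp : Complex.exp ((θ i - β i : ℝ) * Complex.I) = 1 := by
      push_cast
      rw [sub_mul, Complex.exp_sub, hcancel]
      exact div_self (Complex.exp_ne_zero _)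
    rw [Complex.exp_eq_one_iff] at hexp
    obtain ⟨k, hk⟩ := hexp
    refine ⟨k, ?_⟩
    have him := congrArg Complex.im hk
    push_cast at him
    simpa [Complex.mul_im] using him
  -- in fact θ i = β i for all i in range
  have heq : ∀ i, 1 ≤ i → i ≤ M + 1 → θ i = β i := by
    intro i hi
    induction i, hi using Nat.le_induction with
    | base => intro _; exact hθ1
    | succ i hi ih =>
      intro hle
      have hiM : i ≤ M := by omega
      obtain ⟨k, hk⟩ := hkey (i + 1) (by omega) hle
      have hih := ih (by omega)
      have hβi := hβrange i hi (by omega)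
      have hβi1 := hβrange (i + 1) (by omega) hle
      have hαi := hα i hi hiM
      rw [hθsucc i hi, hih] at hk
      have hk0 : k = 0 := by
        have h1 : (-1 : ℝ) < (k : ℝ) := by nlinarith
        have h2 : (k : ℝ) < 1 := by nlinarith
        have h1' : (-1 : ℤ) < k := by exact_mod_cast h1
        have h2' : k < 1 := by exact_mod_cast h2
        omega
      rw [hk0] at hk
      push_cast at hk
      rw [hθsucc i hi, hih]
      linarith
  -- contradiction
  have hβM1 : β (M + 1) = β 1 := by simp [hβdef, hclosed]
  have hθM1 : θ (M + 1) = β 1 + 2 * Real.pi := by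
    rw [hθdef]
    simp only
    rw [Finset.Ico_add_one_right_eq_Icc, hsum]
  have := heq (M + 1) (by omega) le_rfl
  rw [hθM1, hβM1] at this
  linarith
end

section
/- Let n₁, …, n_M be unit vectors in ℝ² such that ⟨n_i, Ω⟩ > 0 for all i, where Ω is a fixed unit vector. Then all n_i lie in the open half-plane {v : ⟨v, Ω⟩ > 0}, and the total winding of the sequence n₁ → n₂ → ⋯ → n_M → n₁, computed as the sum of oriented angles from n_i to n_{i+1} chosen in (−π, π), equals 0 (in particular it cannot equal 2π). -/
open Complex in
/-- Unit vectors `n 0, …, n (M-1)` all lying in the open half-plane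
`{v : ⟨v, Ω⟩ > 0}` determined by a unit vector `Ω` (we set `n M = n 0` to close
the cycle), with oriented angles `φ i ∈ (−π, π)` from `n i` to `n (i+1)`: then
the total winding `∑ φ i` equals `0` (in particular it cannot be `2π`). -/
theorem winding_in_half_plane_zero (M : ℕ) (hM : 0 < M)
    (n : ℕ → ℝ × ℝ) (φ : ℕ → ℝ) (Ω : ℝ × ℝ)
    (hΩ : dot2 Ω Ω = 1)
    (hunit : ∀ i < M, dot2 (n i) (n i) = 1)
    (hclosed : n M = n 0)
    (hφ : ∀ i < M, -Real.pi < φ i ∧ φ i < Real.pi)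
    (hrot : ∀ i < M, n (i + 1) = rot (φ i) (n i))
    (hpos : ∀ i < M, 0 < dot2 (n i) Ω) :
    (∀ i < M, n i ∈ {v : ℝ × ℝ | 0 < dot2 v Ω}) ∧
      (∑ i ∈ Finset.range M, φ i) = 0 := by
  refine ⟨fun i hi => hpos i hi, ?_⟩
  set f : ℝ × ℝ → ℂ := fun v => ⟨v.1, v.2⟩ with hf
  set z : ℕ → ℂ := fun i => (starRingEnd ℂ) (f Ω) * f (n i) with hz
  have hre : ∀ i < M, 0 < (z i).re := by
    intro i hi
    have h : (z i).re = dot2 (n i) Ω := by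
      simp [hz, hf, Complex.mul_re, dot2]; ring
    rw [h]; exact hpos i hi
  have hzM : z M = z 0 := by simp [hz, hclosed]
  set θ : ℕ → ℝ := fun i => (z i).arg with hθ
  have hθM : θ M = θ 0 := by simp [hθ, hzM]
  have hbound : ∀ i ≤ M, |θ i| < Real.pi / 2 := by
    intro i hi
    rcases lt_or_eq_of_le hi with h | h
    · exact Complex.abs_arg_lt_pi_div_two_iff.mpr (Or.inl (hre i h))
    · subst h
      rw [hθM]
      exact Complex.abs_arg_lt_pi_div_two_iff.mpr (Or.inl (hre 0 hM))
  have hstep : ∀ i < M, φ i = θ (i + 1) - θ i := by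
    intro i hi
    have hzne : z i ≠ 0 := by
      intro h
      have := hre i hi
      rw [h] at this; simp at this
    have hmul : z (i + 1) = Complex.exp (φ i * Complex.I) * z i := by
      rw [hz]
      simp only [hrot i hi]
      rw [Complex.exp_mul_I]
      apply Complex.ext <;>
        simp [hf, rot, Complex.mul_re, Complex.mul_im, Complex.cos_ofReal_re, Complex.sin_ofReal_re] <;> ring
    have hang : ((φ i : ℝ) : Real.Angle) = ((θ (i + 1) - θ i : ℝ) : Real.Angle) := by
      have h1 : ((z (i + 1)).arg : Real.Angle) =
          ((Complex.exp (φ i * Complex.I)).arg : Real.Angle) + (z i).arg := by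
        rw [hmul]
        exact Complex.arg_mul_coe_angle (Complex.exp_ne_zero _) hzne
      have h2 : (Complex.exp (φ i * Complex.I)).arg = φ i := by
        rw [Complex.exp_mul_I]
        exact Complex.arg_cos_add_sin_mul_I ⟨(hφ i hi).1, le_of_lt (hφ i hi).2⟩
      rw [h2] at h1
      rw [Real.Angle.coe_sub]
      rw [h1]
      abel
    obtain ⟨k, hk⟩ := Real.Angle.angle_eq_iff_two_pi_dvd_sub.mp hang
    have hπ : 0 < Real.pi := Real.pi_pos
    have h1 : |φ i| < Real.pi := abs_lt.mpr (hφ i hi)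
    have h2 : |θ (i + 1)| < Real.pi / 2 := hbound (i + 1) hi
    have h3 : |θ i| < Real.pi / 2 := hbound i (le_of_lt hi)
    have hk0 : k = 0 := by
      by_contra hk0
      have : (1 : ℝ) ≤ |(k : ℝ)| := by
        rw [← Int.cast_abs]
        exact_mod_cast Int.one_le_abs hk0
      have habs : |φ i - (θ (i + 1) - θ i)| < 2 * Real.pi := by
        have := abs_sub_abs_le_abs_sub (φ i) (θ (i + 1) - θ i)
        have h4 : |θ (i + 1) - θ i| ≤ |θ (i + 1)| + |θ i| := abs_sub _ _
        calc |φ i - (θ (i + 1) - θ i)| ≤ |φ i| + |θ (i + 1) - θ i| := abs_sub _ _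
          _ ≤ |φ i| + (|θ (i + 1)| + |θ i|) := by linarith
          _ < 2 * Real.pi := by linarith
      rw [hk] at habs
      rw [abs_mul, abs_mul] at habs
      have : |(2 : ℝ)| = 2 := by norm_num
      rw [this, abs_of_pos hπ] at habs
      nlinarith
    rw [hk0] at hk
    simp at hk
    linarith
  calc (∑ i ∈ Finset.range M, φ i) = ∑ i ∈ Finset.range M, (θ (i + 1) - θ i) := by
        apply Finset.sum_congr rfl
        intro i hi
        exact hstep i (Finset.mem_range.mp hi)
    _ = θ M - θ 0 := Finset.sum_range_sub θ M
    _ = 0 := by rw [hθM]; ring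
end

section
/- There exists a finite family of pairwise non-overlapping convex quadrilateral prisms (convex polytopes) in ℝ³ and a direction Ω = (0,0,−1) such that the induced dependency relation (cell C depends on C' if they share a 2-dimensional face with inward normal n of C satisfying ⟨n, Ω⟩ > 0) contains a directed cycle. -/
open scoped RealInnerProductSpace

/-- A directed cycle in a directed graph given by an edge relation `E`. -/
def HasDirectedCycle {V : Type*} (E : V → V → Prop) : Prop :=
  ∃ (m : ℕ) (f : ℕ → V), 0 < m ∧ f m = f 0 ∧ ∀ i < m, E (f i) (f (i + 1))

noncomputable section CyclicAux

def pt (a b c : ℝ) : EuclideanSpace ℝ (Fin 3) := WithLp.toLp 2 (fun k => ![a,b,c] k)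

lemma inner_pt (a b c : ℝ) (x : EuclideanSpace ℝ (Fin 3)) :
    ⟪pt a b c, x⟫ = a * x 0 + b * x 1 + c * x 2 := by
  simp [PiLp.inner_apply, Fin.sum_univ_three, pt, RCLike.inner_apply, mul_comm]

lemma norm_pt (a b c : ℝ) : ‖pt a b c‖ = Real.sqrt (a^2 + b^2 + c^2) := by
  simp [EuclideanSpace.norm_eq, Fin.sum_univ_three, pt, sq_abs]

lemma pt_add (a b c d e f : ℝ) : pt a b c + pt d e f = pt (a+d) (b+e) (c+f) := by
  ext k; fin_cases k <;> simp [pt]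

lemma pt_ne (a b c d e f : ℝ) (k : Fin 3) (h : ![a,b,c] k ≠ ![d,e,f] k) :
    pt a b c ≠ pt d e f := by
  intro hh
  exact h (congrFun (congrArg WithLp.ofLp hh) k)

lemma isLinearMap_inner (v : EuclideanSpace ℝ (Fin 3)) :
    IsLinearMap ℝ (fun x : EuclideanSpace ℝ (Fin 3) => ⟪v, x⟫) :=
  ⟨fun x y => inner_add_right v x y, fun c x => real_inner_smul_right v x c⟩

lemma hull_le (v : EuclideanSpace ℝ (Fin 3)) (c : ℝ) (S : Set (EuclideanSpace ℝ (Fin 3)))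
    (h : ∀ p ∈ S, ⟪v, p⟫ ≤ c) :
    ∀ x ∈ convexHull ℝ S, ⟪v, x⟫ ≤ c :=
  fun _ hx => convexHull_min h (convex_halfSpace_le (isLinearMap_inner v) c) hx

lemma hull_ge (v : EuclideanSpace ℝ (Fin 3)) (c : ℝ) (S : Set (EuclideanSpace ℝ (Fin 3)))
    (h : ∀ p ∈ S, c ≤ ⟪v, p⟫) :
    ∀ x ∈ convexHull ℝ S, c ≤ ⟪v, x⟫ :=
  fun _ hx => convexHull_min h (convex_halfSpace_ge (isLinearMap_inner v) c) hx

lemma sep_interiors (v : EuclideanSpace ℝ (Fin 3)) (c : ℝ) (hv : v ≠ 0)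
    (s t : Set (EuclideanSpace ℝ (Fin 3)))
    (hs : ∀ x ∈ s, ⟪v, x⟫ ≤ c) (ht : ∀ x ∈ t, c ≤ ⟪v, x⟫) :
    interior s ∩ interior t = ∅ := by
  by_contra h
  obtain ⟨p, hps, hpt⟩ := Set.nonempty_iff_ne_empty.2 h
  have hop : IsOpen (interior s ∩ interior t) := isOpen_interior.inter isOpen_interior
  obtain ⟨ε, hε, hball⟩ := Metric.isOpen_iff.1 hop p ⟨hps, hpt⟩
  have hvn : (0:ℝ) < ‖v‖ := norm_pos_iff.2 hv
  set δ : ℝ := ε / (2 * ‖v‖) with hδ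
  have hδpos : 0 < δ := by positivity
  have hq : p + δ • v ∈ Metric.ball p ε := by
    rw [Metric.mem_ball, dist_eq_norm]
    have : ‖p + δ • v - p‖ = δ * ‖v‖ := by
      rw [add_sub_cancel_left, norm_smul, Real.norm_eq_abs, abs_of_pos hδpos]
    rw [this, hδ]
    calc ε / (2 * ‖v‖) * ‖v‖ = ε / 2 := by field_simp
    _ < ε := by linarith
  have hqs : p + δ • v ∈ s := interior_subset (hball hq).1
  have hpc : ⟪v, p⟫ = c :=
    le_antisymm (hs p (interior_subset hps)) (ht p (interior_subset hpt))
  have := hs _ hqs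
  rw [inner_add_right, real_inner_smul_right, real_inner_self_eq_norm_sq, hpc] at this
  have hpos : 0 < δ * ‖v‖ ^ 2 := by positivity
  linarith

lemma collinear_cross (s : Set (EuclideanSpace ℝ (Fin 3))) (h : Collinear ℝ s)
    (p1 p2 p3 : EuclideanSpace ℝ (Fin 3)) (h1 : p1 ∈ s) (h2 : p2 ∈ s) (h3 : p3 ∈ s)
    (i j : Fin 3) :
    (p2 i - p1 i) * (p3 j - p1 j) = (p2 j - p1 j) * (p3 i - p1 i) := by
  obtain ⟨v, hv⟩ := (collinear_iff_of_mem h1).1 h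
  obtain ⟨r2, hr2⟩ := hv p2 h2
  obtain ⟨r3, hr3⟩ := hv p3 h3
  have e2 : ∀ k, p2 k = r2 * v k + p1 k := fun k => by rw [hr2]; rfl
  have e3 : ∀ k, p3 k = r3 * v k + p1 k := fun k => by rw [hr3]; rfl
  rw [e2 i, e2 j, e3 i, e3 j]; ring

lemma interior_nonempty_of_four (S : Set (EuclideanSpace ℝ (Fin 3)))
    (q : EuclideanSpace ℝ (Fin 3)) (a b c : ℝ) (ha : a ≠ 0) (hb : b ≠ 0) (hc : c ≠ 0)
    (h0 : q ∈ S) (h1 : q + pt a 0 0 ∈ S) (h2 : q + pt 0 b 0 ∈ S) (h3 : q + pt 0 0 c ∈ S) :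
    (interior (convexHull ℝ S)).Nonempty := by
  rw [(convex_convexHull ℝ S).interior_nonempty_iff_affineSpan_eq_top, affineSpan_convexHull]
  have hspan : Submodule.span ℝ {pt a 0 0, pt 0 b 0, pt 0 0 c} = ⊤ := by
    rw [eq_top_iff]
    intro x _
    have hx : x = (x 0 / a) • pt a 0 0 + (x 1 / b) • pt 0 b 0 + (x 2 / c) • pt 0 0 c := by
      ext k
      fin_cases k <;> simp [pt] <;> field_simp
    rw [hx]
    refine Submodule.add_mem _ (Submodule.add_mem _ ?_ ?_) ?_ <;>
      exact Submodule.smul_mem _ _ (Submodule.subset_span (by simp))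
  set A := affineSpan ℝ S
  have hq : q ∈ A := subset_affineSpan _ _ h0
  have hdir : ∀ u ∈ ({pt a 0 0, pt 0 b 0, pt 0 0 c} : Set (EuclideanSpace ℝ (Fin 3))),
      u ∈ A.direction := by
    rintro u (rfl | rfl | rfl)
    · have := AffineSubspace.vsub_mem_direction (subset_affineSpan _ _ h1) hq
      simpa using this
    · have := AffineSubspace.vsub_mem_direction (subset_affineSpan _ _ h2) hq
      simpa using this
    · have := AffineSubspace.vsub_mem_direction (subset_affineSpan _ _ h3) hq
      simpa using this
  have hdirtop : A.direction = ⊤ := by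
    rw [eq_top_iff, ← hspan, Submodule.span_le]
    exact hdir
  rw [eq_top_iff]
  intro x _
  have : (x - q) +ᵥ q ∈ A :=
    A.vadd_mem_of_mem_direction (hdirtop ▸ Submodule.mem_top) hq
  simpa using this

open Classical in
/-- The four prisms, as lists of vertices. -/
def cellV : Fin 4 → Finset (EuclideanSpace ℝ (Fin 3)) :=
  ![ {pt 0 0 0, pt 2 0 0, pt 2 1 0, pt 0 1 0,
      pt 0 0 1, pt (3/2) 0 1, pt (3/2) (3/2) 1, pt 0 (3/2) 1},
     {pt 2 0 0, pt 3 0 0, pt 3 2 0, pt 2 2 0,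
      pt (3/2) 0 1, pt 3 0 1, pt 3 (3/2) 1, pt (3/2) (3/2) 1},
     {pt 1 2 0, pt 3 2 0, pt 3 3 0, pt 1 3 0,
      pt (3/2) (3/2) 1, pt 3 (3/2) 1, pt 3 3 1, pt (3/2) 3 1},
     {pt 0 1 0, pt 1 1 0, pt 1 3 0, pt 0 3 0,
      pt 0 (3/2) 1, pt (3/2) (3/2) 1, pt (3/2) 3 1, pt 0 3 1} ]

def cells4 : Fin 4 → Set (EuclideanSpace ℝ (Fin 3)) :=
  fun i => convexHull ℝ ((cellV i : Set (EuclideanSpace ℝ (Fin 3))))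

/-- The generic edge-producing lemma. -/
lemma mk_edge (v : EuclideanSpace ℝ (Fin 3)) (c : ℝ)
    (si sj : Set (EuclideanSpace ℝ (Fin 3)))
    (hnorm : ‖v‖ = Real.sqrt 5)
    (hi : ∀ x ∈ si, c ≤ ⟪v, x⟫) (hj : ∀ x ∈ sj, ⟪v, x⟫ ≤ c)
    (hΩ : 0 < ⟪v, pt 0 0 (-1)⟫)
    (hnc : ¬ Collinear ℝ (si ∩ sj)) :
    ∃ n : EuclideanSpace ℝ (Fin 3),
      ‖n‖ = 1 ∧
      ¬ Collinear ℝ (si ∩ sj) ∧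
      (∀ x ∈ si ∩ sj, ∀ y ∈ si ∩ sj, ⟪n, x - y⟫ = 0) ∧
      (∀ x ∈ si, ∀ y ∈ si ∩ sj, 0 ≤ ⟪n, x - y⟫) ∧
      0 < ⟪n, pt 0 0 (-1)⟫ := by
  have h5 : (0:ℝ) < Real.sqrt 5 := Real.sqrt_pos.2 (by norm_num)
  refine ⟨(Real.sqrt 5)⁻¹ • v, ?_, hnc, ?_, ?_, ?_⟩
  · rw [norm_smul, Real.norm_eq_abs, abs_of_pos (by positivity), hnorm]
    field_simp
  · intro x hx y hy
    have hxc : ⟪v, x⟫ = c := le_antisymm (hj x hx.2) (hi x hx.1)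
    have hyc : ⟪v, y⟫ = c := le_antisymm (hj y hy.2) (hi y hy.1)
    rw [real_inner_smul_left, inner_sub_right, hxc, hyc]
    ring
  · intro x hx y hy
    have hyc : ⟪v, y⟫ = c := le_antisymm (hj y hy.2) (hi y hy.1)
    have hxc : c ≤ ⟪v, x⟫ := hi x hx
    rw [real_inner_smul_left, inner_sub_right, hyc]
    have : 0 ≤ ⟪v, x⟫ - c := by linarith
    positivity
  · rw [real_inner_smul_left]
    positivity

end CyclicAux


lemma pt_eq {a b c a' b' c' : ℝ} (h1 : a = a') (h2 : b = b') (h3 : c = c') :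
    pt a b c = pt a' b' c' := by rw [h1, h2, h3]

lemma mem4 (i : Fin 4) (q u p : EuclideanSpace ℝ (Fin 3)) (h : q + u = p)
    (hp : p ∈ ((cellV i : Set (EuclideanSpace ℝ (Fin 3))))) :
    q + u ∈ ((cellV i : Set (EuclideanSpace ℝ (Fin 3)))) := by rw [h]; exact hp

lemma pt_ne_zero (a b c : ℝ) (k : Fin 3) (h : ![a,b,c] k ≠ 0) : pt a b c ≠ 0 :=
  fun hh => h (congrFun (congrArg WithLp.ofLp hh) k)

lemma mem_cell (i : Fin 4) (p : EuclideanSpace ℝ (Fin 3))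
    (h : p ∈ ((cellV i : Set (EuclideanSpace ℝ (Fin 3))))) : p ∈ cells4 i :=
  subset_convexHull ℝ _ h

section Checks

-- half-space checks
lemma h0ge : ∀ x ∈ cells4 0, (-4:ℝ) ≤ ⟪pt (-2) 0 (-1), x⟫ := by
  apply hull_ge; intro p hp; simp [cellV] at hp
  rcases hp with rfl|rfl|rfl|rfl|rfl|rfl|rfl|rfl <;>
    simp [PiLp.inner_apply, RCLike.inner_apply, pt, Fin.sum_univ_three] <;> norm_num

lemma h1le : ∀ x ∈ cells4 1, ⟪pt (-2) 0 (-1), x⟫ ≤ (-4:ℝ) := by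
  apply hull_le; intro p hp; simp [cellV] at hp
  rcases hp with rfl|rfl|rfl|rfl|rfl|rfl|rfl|rfl <;>
    simp [PiLp.inner_apply, RCLike.inner_apply, pt, Fin.sum_univ_three] <;> norm_num

lemma h1ge : ∀ x ∈ cells4 1, (-4:ℝ) ≤ ⟪pt 0 (-2) (-1), x⟫ := by
  apply hull_ge; intro p hp; simp [cellV] at hp
  rcases hp with rfl|rfl|rfl|rfl|rfl|rfl|rfl|rfl <;>
    simp [PiLp.inner_apply, RCLike.inner_apply, pt, Fin.sum_univ_three] <;> norm_num

lemma h2le : ∀ x ∈ cells4 2, ⟪pt 0 (-2) (-1), x⟫ ≤ (-4:ℝ) := by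
  apply hull_le; intro p hp; simp [cellV] at hp
  rcases hp with rfl|rfl|rfl|rfl|rfl|rfl|rfl|rfl <;>
    simp [PiLp.inner_apply, RCLike.inner_apply, pt, Fin.sum_univ_three] <;> norm_num

lemma h2ge : ∀ x ∈ cells4 2, (2:ℝ) ≤ ⟪pt 2 0 (-1), x⟫ := by
  apply hull_ge; intro p hp; simp [cellV] at hp
  rcases hp with rfl|rfl|rfl|rfl|rfl|rfl|rfl|rfl <;>
    simp [PiLp.inner_apply, RCLike.inner_apply, pt, Fin.sum_univ_three] <;> norm_num

lemma h3le : ∀ x ∈ cells4 3, ⟪pt 2 0 (-1), x⟫ ≤ (2:ℝ) := by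
  apply hull_le; intro p hp; simp [cellV] at hp
  rcases hp with rfl|rfl|rfl|rfl|rfl|rfl|rfl|rfl <;>
    simp [PiLp.inner_apply, RCLike.inner_apply, pt, Fin.sum_univ_three] <;> norm_num

lemma h3ge : ∀ x ∈ cells4 3, (2:ℝ) ≤ ⟪pt 0 2 (-1), x⟫ := by
  apply hull_ge; intro p hp; simp [cellV] at hp
  rcases hp with rfl|rfl|rfl|rfl|rfl|rfl|rfl|rfl <;>
    simp [PiLp.inner_apply, RCLike.inner_apply, pt, Fin.sum_univ_three] <;> norm_num

lemma h0le : ∀ x ∈ cells4 0, ⟪pt 0 2 (-1), x⟫ ≤ (2:ℝ) := by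
  apply hull_le; intro p hp; simp [cellV] at hp
  rcases hp with rfl|rfl|rfl|rfl|rfl|rfl|rfl|rfl <;>
    simp [PiLp.inner_apply, RCLike.inner_apply, pt, Fin.sum_univ_three] <;> norm_num

-- extra separations for the two diagonal pairs
lemma d0le : ∀ x ∈ cells4 0, ⟪pt 0 2 1, x⟫ ≤ (4:ℝ) := by
  apply hull_le; intro p hp; simp [cellV] at hp
  rcases hp with rfl|rfl|rfl|rfl|rfl|rfl|rfl|rfl <;>
    simp [PiLp.inner_apply, RCLike.inner_apply, pt, Fin.sum_univ_three] <;> norm_num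

lemma d2ge : ∀ x ∈ cells4 2, (4:ℝ) ≤ ⟪pt 0 2 1, x⟫ := by
  apply hull_ge; intro p hp; simp [cellV] at hp
  rcases hp with rfl|rfl|rfl|rfl|rfl|rfl|rfl|rfl <;>
    simp [PiLp.inner_apply, RCLike.inner_apply, pt, Fin.sum_univ_three] <;> norm_num

lemma d1ge : ∀ x ∈ cells4 1, (4:ℝ) ≤ ⟪pt 2 0 1, x⟫ := by
  apply hull_ge; intro p hp; simp [cellV] at hp
  rcases hp with rfl|rfl|rfl|rfl|rfl|rfl|rfl|rfl <;>
    simp [PiLp.inner_apply, RCLike.inner_apply, pt, Fin.sum_univ_three] <;> norm_num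

lemma d3le : ∀ x ∈ cells4 3, ⟪pt 2 0 1, x⟫ ≤ (4:ℝ) := by
  apply hull_le; intro p hp; simp [cellV] at hp
  rcases hp with rfl|rfl|rfl|rfl|rfl|rfl|rfl|rfl <;>
    simp [PiLp.inner_apply, RCLike.inner_apply, pt, Fin.sum_univ_three] <;> norm_num

end Checks

-- non-collinearity of the four shared faces
lemma nc01 : ¬ Collinear ℝ (cells4 0 ∩ cells4 1) := by
  intro h
  have := collinear_cross _ h (pt 2 0 0) (pt (3/2) 0 1) (pt (3/2) (3/2) 1)
    ⟨mem_cell 0 _ (by simp [cellV]), mem_cell 1 _ (by simp [cellV])⟩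
    ⟨mem_cell 0 _ (by simp [cellV]), mem_cell 1 _ (by simp [cellV])⟩
    ⟨mem_cell 0 _ (by simp [cellV]), mem_cell 1 _ (by simp [cellV])⟩ 1 2
  simp [pt] at this
  norm_num at this

lemma nc12 : ¬ Collinear ℝ (cells4 1 ∩ cells4 2) := by
  intro h
  have := collinear_cross _ h (pt 3 2 0) (pt 3 (3/2) 1) (pt (3/2) (3/2) 1)
    ⟨mem_cell 1 _ (by simp [cellV]), mem_cell 2 _ (by simp [cellV])⟩
    ⟨mem_cell 1 _ (by simp [cellV]), mem_cell 2 _ (by simp [cellV])⟩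
    ⟨mem_cell 1 _ (by simp [cellV]), mem_cell 2 _ (by simp [cellV])⟩ 0 2
  simp [pt] at this
  norm_num at this

lemma nc23 : ¬ Collinear ℝ (cells4 2 ∩ cells4 3) := by
  intro h
  have := collinear_cross _ h (pt 1 3 0) (pt (3/2) 3 1) (pt (3/2) (3/2) 1)
    ⟨mem_cell 2 _ (by simp [cellV]), mem_cell 3 _ (by simp [cellV])⟩
    ⟨mem_cell 2 _ (by simp [cellV]), mem_cell 3 _ (by simp [cellV])⟩
    ⟨mem_cell 2 _ (by simp [cellV]), mem_cell 3 _ (by simp [cellV])⟩ 1 2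
  simp [pt] at this
  norm_num at this

lemma nc30 : ¬ Collinear ℝ (cells4 3 ∩ cells4 0) := by
  intro h
  have := collinear_cross _ h (pt 0 1 0) (pt 0 (3/2) 1) (pt (3/2) (3/2) 1)
    ⟨mem_cell 3 _ (by simp [cellV]), mem_cell 0 _ (by simp [cellV])⟩
    ⟨mem_cell 3 _ (by simp [cellV]), mem_cell 0 _ (by simp [cellV])⟩
    ⟨mem_cell 3 _ (by simp [cellV]), mem_cell 0 _ (by simp [cellV])⟩ 0 2
  simp [pt] at this
  norm_num at this

lemma int0 : (interior (cells4 0)).Nonempty := by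
  show (interior (convexHull ℝ ((cellV 0 : Set (EuclideanSpace ℝ (Fin 3)))))).Nonempty
  refine interior_nonempty_of_four _ (pt 0 0 0) (2) (1) (1) (by norm_num) (by norm_num) (by norm_num) ?_ ?_ ?_ ?_
  · simp [cellV]
  · exact mem4 0 _ _ (pt 2 0 0) (by rw [pt_add]; exact pt_eq (by norm_num) (by norm_num) (by norm_num)) (by simp [cellV])
  · exact mem4 0 _ _ (pt 0 1 0) (by rw [pt_add]; exact pt_eq (by norm_num) (by norm_num) (by norm_num)) (by simp [cellV])
  · exact mem4 0 _ _ (pt 0 0 1) (by rw [pt_add]; exact pt_eq (by norm_num) (by norm_num) (by norm_num)) (by simp [cellV])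

lemma int1 : (interior (cells4 1)).Nonempty := by
  show (interior (convexHull ℝ ((cellV 1 : Set (EuclideanSpace ℝ (Fin 3)))))).Nonempty
  refine interior_nonempty_of_four _ (pt 3 0 0) (-1) (2) (1) (by norm_num) (by norm_num) (by norm_num) ?_ ?_ ?_ ?_
  · simp [cellV]
  · exact mem4 1 _ _ (pt 2 0 0) (by rw [pt_add]; exact pt_eq (by norm_num) (by norm_num) (by norm_num)) (by simp [cellV])
  · exact mem4 1 _ _ (pt 3 2 0) (by rw [pt_add]; exact pt_eq (by norm_num) (by norm_num) (by norm_num)) (by simp [cellV])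
  · exact mem4 1 _ _ (pt 3 0 1) (by rw [pt_add]; exact pt_eq (by norm_num) (by norm_num) (by norm_num)) (by simp [cellV])

lemma int2 : (interior (cells4 2)).Nonempty := by
  show (interior (convexHull ℝ ((cellV 2 : Set (EuclideanSpace ℝ (Fin 3)))))).Nonempty
  refine interior_nonempty_of_four _ (pt 3 3 0) (-2) (-1) (1) (by norm_num) (by norm_num) (by norm_num) ?_ ?_ ?_ ?_
  · simp [cellV]
  · exact mem4 2 _ _ (pt 1 3 0) (by rw [pt_add]; exact pt_eq (by norm_num) (by norm_num) (by norm_num)) (by simp [cellV])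
  · exact mem4 2 _ _ (pt 3 2 0) (by rw [pt_add]; exact pt_eq (by norm_num) (by norm_num) (by norm_num)) (by simp [cellV])
  · exact mem4 2 _ _ (pt 3 3 1) (by rw [pt_add]; exact pt_eq (by norm_num) (by norm_num) (by norm_num)) (by simp [cellV])

lemma int3 : (interior (cells4 3)).Nonempty := by
  show (interior (convexHull ℝ ((cellV 3 : Set (EuclideanSpace ℝ (Fin 3)))))).Nonempty
  refine interior_nonempty_of_four _ (pt 0 3 0) (1) (-2) (1) (by norm_num) (by norm_num) (by norm_num) ?_ ?_ ?_ ?_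
  · simp [cellV]
  · exact mem4 3 _ _ (pt 1 3 0) (by rw [pt_add]; exact pt_eq (by norm_num) (by norm_num) (by norm_num)) (by simp [cellV])
  · exact mem4 3 _ _ (pt 0 1 0) (by rw [pt_add]; exact pt_eq (by norm_num) (by norm_num) (by norm_num)) (by simp [cellV])
  · exact mem4 3 _ _ (pt 0 3 1) (by rw [pt_add]; exact pt_eq (by norm_num) (by norm_num) (by norm_num)) (by simp [cellV])


/-- 3D counterexample: there is a finite family of convex polytopes
(convex quadrilateral prisms) in `ℝ³` with pairwise disjoint interiors such
that, for the direction `Ω = (0,0,−1)`, the dependency relation — cell `i`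
depends on cell `j` if they share a 2-dimensional face whose unit normal `n`
pointing into cell `i` satisfies `⟨n, Ω⟩ > 0` — contains a directed cycle. -/
theorem cyclic_dependency_in_3d :
    ∃ (I : ℕ) (cells : Fin I → Set (EuclideanSpace ℝ (Fin 3))),
      (∀ i, ∃ S : Finset (EuclideanSpace ℝ (Fin 3)),
        cells i = convexHull ℝ (S : Set (EuclideanSpace ℝ (Fin 3))) ∧
        (interior (cells i)).Nonempty) ∧
      (∀ i j, i ≠ j → interior (cells i) ∩ interior (cells j) = ∅) ∧
      HasDirectedCycle (fun i j =>
        ∃ n : EuclideanSpace ℝ (Fin 3),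
          ‖n‖ = 1 ∧
          ¬ Collinear ℝ (cells i ∩ cells j) ∧
          (∀ x ∈ cells i ∩ cells j, ∀ y ∈ cells i ∩ cells j,
            ⟪n, x - y⟫ = 0) ∧
          (∀ x ∈ cells i, ∀ y ∈ cells i ∩ cells j, 0 ≤ ⟪n, x - y⟫) ∧
          0 < ⟪n, (WithLp.toLp 2 (fun k => ![(0:ℝ), 0, -1] k) : EuclideanSpace ℝ (Fin 3))⟫) := by
  have hn5 : ∀ a b c : ℝ, a^2 + b^2 + c^2 = 5 → ‖pt a b c‖ = Real.sqrt 5 := by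
    intro a b c h; rw [norm_pt, h]
  have hΩ : ∀ a b : ℝ, 0 < ⟪pt a b (-1), pt 0 0 (-1)⟫ := by
    intro a b
    simp [PiLp.inner_apply, RCLike.inner_apply, pt, Fin.sum_univ_three]
  -- the four cyclic edges
  have e01 := mk_edge (pt (-2) 0 (-1)) (-4) (cells4 0) (cells4 1)
    (hn5 _ _ _ (by norm_num)) h0ge h1le (hΩ _ _) nc01
  have e12 := mk_edge (pt 0 (-2) (-1)) (-4) (cells4 1) (cells4 2)
    (hn5 _ _ _ (by norm_num)) h1ge h2le (hΩ _ _) nc12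
  have e23 := mk_edge (pt 2 0 (-1)) 2 (cells4 2) (cells4 3)
    (hn5 _ _ _ (by norm_num)) h2ge h3le (hΩ _ _) nc23
  have e30 := mk_edge (pt 0 2 (-1)) 2 (cells4 3) (cells4 0)
    (hn5 _ _ _ (by norm_num)) h3ge h0le (hΩ _ _) nc30
  -- disjoint interiors
  have D10 : interior (cells4 1) ∩ interior (cells4 0) = ∅ :=
    sep_interiors _ _ (pt_ne_zero (-2) 0 (-1) 0 (by norm_num)) _ _ h1le h0ge
  have D21 : interior (cells4 2) ∩ interior (cells4 1) = ∅ :=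
    sep_interiors _ _ (pt_ne_zero 0 (-2) (-1) 1 (by norm_num)) _ _ h2le h1ge
  have D32 : interior (cells4 3) ∩ interior (cells4 2) = ∅ :=
    sep_interiors _ _ (pt_ne_zero 2 0 (-1) 0 (by norm_num)) _ _ h3le h2ge
  have D03 : interior (cells4 0) ∩ interior (cells4 3) = ∅ :=
    sep_interiors _ _ (pt_ne_zero 0 2 (-1) 1 (by norm_num)) _ _ h0le h3ge
  have D02 : interior (cells4 0) ∩ interior (cells4 2) = ∅ :=
    sep_interiors _ _ (pt_ne_zero 0 2 1 1 (by norm_num)) _ _ d0le d2ge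
  have D31 : interior (cells4 3) ∩ interior (cells4 1) = ∅ :=
    sep_interiors _ _ (pt_ne_zero 2 0 1 0 (by norm_num)) _ _ d3le d1ge
  refine ⟨4, cells4, ?_, ?_, ?_⟩
  · intro i
    fin_cases i
    · exact ⟨cellV 0, rfl, int0⟩
    · exact ⟨cellV 1, rfl, int1⟩
    · exact ⟨cellV 2, rfl, int2⟩
    · exact ⟨cellV 3, rfl, int3⟩
  · intro i j hij
    fin_cases i <;> fin_cases j <;>
      first
        | exact absurd rfl hij
        | exact D10 | exact D21 | exact D32 | exact D03 | exact D02 | exact D31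
        | (rw [Set.inter_comm]; first
            | exact D10 | exact D21 | exact D32 | exact D03 | exact D02 | exact D31)
  · refine ⟨4, fun i => ⟨i % 4, Nat.mod_lt _ (by norm_num)⟩, by norm_num, rfl, ?_⟩
    intro i hi
    interval_cases i
    · exact e01
    · exact e12
    · exact e23
    · exact e30
end
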